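/- Let P be a row-stochastic n×n matrix, μ a stationary distribution of P, po : {1,…,n}² → ℝ, and y ∈ (ℝ ∪ {+∞})ⁿ. Suppose that whenever y_a is finite and P(a,b) > 0 then y_b is finite, and that for each a with μ(a) > 0 and y_a finite we have y_a ≥ Σ_{b : P(a,b)>0} P(a,b)·(y_b + po(a,b)). If μ is supported on states with finite y, then Σ_{a,b} μ(a)P(a,b)·po(a,b) ≤ 0. -/

import Mathlib

/-- Dual counterpart of the stationary payoff estimate: if `y ∈ (ℝ ∪ {+∞})ⁿ` is
finite on the support of the stationary distribution `μ`, finiteness propagates along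
positive transitions, and `y_a ≥ Σ_{b : P(a,b)>0} P(a,b)(y_b + po(a,b))` at every
supported state, then the stationary average payoff is `≤ 0`. -/
theorem stmt7 (n : ℕ) (P : Matrix (Fin n) (Fin n) ℝ)
    (hP0 : ∀ a b, 0 ≤ P a b) (hP1 : ∀ a, ∑ b, P a b = 1)
    (μ : Fin n → ℝ) (hμ0 : ∀ a, 0 ≤ μ a) (hμ1 : ∑ a, μ a = 1)
    (hstat : ∀ b, μ b = ∑ a, μ a * P a b)
    (po : Fin n → Fin n → ℝ) (y : Fin n → WithTop ℝ)
    (hprop : ∀ a b, y a ≠ ⊤ → 0 < P a b → y b ≠ ⊤)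
    (hineq : ∀ a, 0 < μ a → y a ≠ ⊤ →
      ∑ b ∈ Finset.univ.filter (fun b => 0 < P a b),
          P a b * ((y b).untopD 0 + po a b) ≤ (y a).untopD 0)
    (hsupp : ∀ a, 0 < μ a → y a ≠ ⊤) :
    ∑ a, ∑ b, μ a * P a b * po a b ≤ 0 := by
  have hfull : ∀ a, ∑ b ∈ Finset.univ.filter (fun b => 0 < P a b),
      P a b * ((y b).untopD 0 + po a b) = ∑ b, P a b * ((y b).untopD 0 + po a b) := by
    intro a
    apply Finset.sum_subset (Finset.filter_subset _ _)
    intro b _ hb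
    simp only [Finset.mem_filter, Finset.mem_univ, true_and, not_lt] at hb
    have hz : P a b = 0 := le_antisymm hb (hP0 a b)
    simp [hz]
  have key : ∑ a, μ a * ∑ b, P a b * ((y b).untopD 0 + po a b)
      ≤ ∑ a, μ a * (y a).untopD 0 := by
    apply Finset.sum_le_sum
    intro a _
    rcases (hμ0 a).lt_or_eq with h | h
    · exact mul_le_mul_of_nonneg_left
        (by rw [← hfull a]; exact hineq a h (hsupp a h)) h.le
    · simp [← h]
  have expand : ∑ a, μ a * ∑ b, P a b * ((y b).untopD 0 + po a b)
      = (∑ a, ∑ b, μ a * P a b * (y b).untopD 0) + ∑ a, ∑ b, μ a * P a b * po a b := by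
    rw [← Finset.sum_add_distrib]
    refine Finset.sum_congr rfl fun a _ => ?_
    rw [Finset.mul_sum, ← Finset.sum_add_distrib]
    exact Finset.sum_congr rfl fun b _ => by ring
  have hswap : ∑ a, ∑ b, μ a * P a b * (y b).untopD 0 = ∑ a, μ a * (y a).untopD 0 := by
    rw [Finset.sum_comm]
    refine Finset.sum_congr rfl fun b _ => ?_
    rw [hstat b, Finset.sum_mul]
  rw [expand, hswap] at key
  linarith
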